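/- (Corollary 2) If Ĉ_p ⊆ ℝ^n is controlled invariant within X̂ for the auxiliary system Σ_aux^prev, then C_{p,ext} is controlled invariant within S_p for the augmented system Σ_aug^prev. -/

import Mathlib

open Pointwise

/-- The Minkowski difference `S₁ ⊖ S₂ = {x : x + y ∈ S₁ for all y ∈ S₂}`. -/
def minkDiff {n : ℕ} (S₁ S₂ : Set (Fin n → ℝ)) : Set (Fin n → ℝ) :=
  {x | ∀ y ∈ S₂, x + y ∈ S₁}

/-- The set `(A⁰F₀D₀ ⊕ ⋯ ⊕ A^{a-1}F₀D₀) ⊕ (A⁰F_pD_p ⊕ ⋯ ⊕ A^{b-1}F_pD_p)`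
(a Minkowski sum over an empty index range being `{0}`). -/
def ESet {n k₀ l : ℕ} (A : Matrix (Fin n) (Fin n) ℝ) (F₀ : Matrix (Fin n) (Fin k₀) ℝ)
    (Fp : Matrix (Fin n) (Fin l) ℝ) (D₀ : Set (Fin k₀ → ℝ)) (Dp : Set (Fin l → ℝ))
    (a b : ℕ) : Set (Fin n → ℝ) :=
  (∑ i ∈ Finset.Icc 1 a, (fun v => (A ^ (i - 1)).mulVec (F₀.mulVec v)) '' D₀) +
    ∑ i ∈ Finset.Icc 1 b, (fun v => (A ^ (i - 1)).mulVec (Fp.mulVec v)) '' Dp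

/-- The transition map of the augmented preview system `Σ_aug^prev` on states
`z = (x, (u₁, …, u_τ), (δ₁, …, δ_p)) ∈ ℝⁿ × (ℝᵐ)^τ × (ℝˡ)^p`:
`g_p(z, u, d₀, δ_f) = (A x + B u₁ + F₀ d₀ + F_p δ₁, u₂, …, u_τ, u, δ₂, …, δ_p, δ_f)`. -/
def gAugP {n m k₀ l : ℕ} (τ p : ℕ) (hτ : 0 < τ) (hp : 0 < p)
    (A : Matrix (Fin n) (Fin n) ℝ) (B : Matrix (Fin n) (Fin m) ℝ)
    (F₀ : Matrix (Fin n) (Fin k₀) ℝ) (Fp : Matrix (Fin n) (Fin l) ℝ)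
    (z : (Fin n → ℝ) × (Fin τ → Fin m → ℝ) × (Fin p → Fin l → ℝ))
    (u : Fin m → ℝ) (d₀ : Fin k₀ → ℝ) (δf : Fin l → ℝ) :
    (Fin n → ℝ) × (Fin τ → Fin m → ℝ) × (Fin p → Fin l → ℝ) :=
  (A.mulVec z.1 + B.mulVec (z.2.1 ⟨0, hτ⟩) + F₀.mulVec d₀ + Fp.mulVec (z.2.2 ⟨0, hp⟩),
    fun i => if h : (i : ℕ) + 1 < τ then z.2.1 ⟨(i : ℕ) + 1, h⟩ else u,
    fun j => if h : (j : ℕ) + 1 < p then z.2.2 ⟨(j : ℕ) + 1, h⟩ else δf)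

/-- The safe set `S_p = X × U^τ × D_p^p` of `Σ_aug^prev`. -/
def safeAugP {n m l : ℕ} (τ p : ℕ) (U : Set (Fin m → ℝ)) (Dp : Set (Fin l → ℝ))
    (X : Set (Fin n → ℝ)) :
    Set ((Fin n → ℝ) × (Fin τ → Fin m → ℝ) × (Fin p → Fin l → ℝ)) :=
  {z | z.1 ∈ X ∧ (∀ i : Fin τ, z.2.1 i ∈ U) ∧ ∀ j : Fin p, z.2.2 j ∈ Dp}

/-- `C` is controlled invariant within `S_p` for the augmented preview system. -/
def CtrlInvAugP {n m k₀ l : ℕ} (τ p : ℕ) (hτ : 0 < τ) (hp : 0 < p)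
    (A : Matrix (Fin n) (Fin n) ℝ) (B : Matrix (Fin n) (Fin m) ℝ)
    (F₀ : Matrix (Fin n) (Fin k₀) ℝ) (Fp : Matrix (Fin n) (Fin l) ℝ)
    (U : Set (Fin m → ℝ)) (D₀ : Set (Fin k₀ → ℝ)) (Dp : Set (Fin l → ℝ))
    (X : Set (Fin n → ℝ))
    (C : Set ((Fin n → ℝ) × (Fin τ → Fin m → ℝ) × (Fin p → Fin l → ℝ))) : Prop :=
  C ⊆ safeAugP τ p U Dp X ∧
    ∀ z ∈ C, ∃ u ∈ U, ∀ d₀ ∈ D₀, ∀ δf ∈ Dp, gAugP τ p hτ hp A B F₀ Fp z u d₀ δf ∈ C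

/-- The transition map of the auxiliary preview system `Σ_aux^prev`:
`f̂_p(x̂, u, d₀, δ_f) = A x̂ + B u + A^τ F₀ d₀ + A^{τ-p} F_p δ_f`. -/
def fAuxP {n m k₀ l : ℕ} (τ p : ℕ) (A : Matrix (Fin n) (Fin n) ℝ)
    (B : Matrix (Fin n) (Fin m) ℝ) (F₀ : Matrix (Fin n) (Fin k₀) ℝ)
    (Fp : Matrix (Fin n) (Fin l) ℝ) (xh : Fin n → ℝ) (u : Fin m → ℝ)
    (d₀ : Fin k₀ → ℝ) (δf : Fin l → ℝ) : Fin n → ℝ :=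
  A.mulVec xh + B.mulVec u + (A ^ τ).mulVec (F₀.mulVec d₀) +
    (A ^ (τ - p)).mulVec (Fp.mulVec δf)

/-- `Ĉ_p` is controlled invariant within `X̂ = X ⊖ (⋯)` for `Σ_aux^prev`. -/
def CtrlInvAuxP {n m k₀ l : ℕ} (τ p : ℕ) (A : Matrix (Fin n) (Fin n) ℝ)
    (B : Matrix (Fin n) (Fin m) ℝ) (F₀ : Matrix (Fin n) (Fin k₀) ℝ)
    (Fp : Matrix (Fin n) (Fin l) ℝ) (U : Set (Fin m → ℝ)) (D₀ : Set (Fin k₀ → ℝ))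
    (Dp : Set (Fin l → ℝ)) (X : Set (Fin n → ℝ)) (Chp : Set (Fin n → ℝ)) : Prop :=
  Chp ⊆ minkDiff X (ESet A F₀ Fp D₀ Dp τ (τ - p)) ∧
    ∀ xh ∈ Chp, ∃ u ∈ U, ∀ d₀ ∈ D₀, ∀ δf ∈ Dp, fAuxP τ p A B F₀ Fp xh u d₀ δf ∈ Chp

/-- The prediction map on augmented preview states:
`x̂_τ(z) = A^τ x + Σ_{i=1}^{τ} A^{i-1} B u_{τ-i+1} + Σ_{j=τ-p+1}^{τ} A^{j-1} F_p δ_{τ-j+1}`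
(written with 0-based indices `q = τ - i` and `r = τ - j`). -/
def predMapP {n m l : ℕ} (τ p : ℕ) (A : Matrix (Fin n) (Fin n) ℝ)
    (B : Matrix (Fin n) (Fin m) ℝ) (Fp : Matrix (Fin n) (Fin l) ℝ)
    (z : (Fin n → ℝ) × (Fin τ → Fin m → ℝ) × (Fin p → Fin l → ℝ)) : Fin n → ℝ :=
  (A ^ τ).mulVec z.1 +
    (∑ q : Fin τ, (A ^ (τ - 1 - (q : ℕ))).mulVec (B.mulVec (z.2.1 q))) +
    ∑ r : Fin p, (A ^ (τ - 1 - (r : ℕ))).mulVec (Fp.mulVec (z.2.2 r))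

/-- `C_{p,τ} = {z : x̂_τ(z) ∈ Ĉ_p}`. -/
def CpTau {n m l : ℕ} (τ p : ℕ) (A : Matrix (Fin n) (Fin n) ℝ)
    (B : Matrix (Fin n) (Fin m) ℝ) (Fp : Matrix (Fin n) (Fin l) ℝ)
    (Chp : Set (Fin n → ℝ)) :
    Set ((Fin n → ℝ) × (Fin τ → Fin m → ℝ) × (Fin p → Fin l → ℝ)) :=
  {z | predMapP τ p A B Fp z ∈ Chp}

/-- For `0 ≤ j ≤ τ-1`, the set
`C_{p,j} = {z : A^j x + Σ_{i=1}^{j} A^{i-1} B u_{j-i+1}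
+ Σ_{i=max(1,j-p+1)}^{j} A^{i-1} F_p δ_{j-i+1}
∈ X ⊖ ((A⁰F₀D₀ ⊕ ⋯ ⊕ A^{j-1}F₀D₀) ⊕ (A⁰F_pD_p ⊕ ⋯ ⊕ A^{j-p-1}F_pD_p))}`
(written with 0-based indices; only indices `< j` contribute). -/
def CpJ {n m k₀ l : ℕ} (τ p : ℕ) (A : Matrix (Fin n) (Fin n) ℝ)
    (B : Matrix (Fin n) (Fin m) ℝ) (F₀ : Matrix (Fin n) (Fin k₀) ℝ)
    (Fp : Matrix (Fin n) (Fin l) ℝ) (D₀ : Set (Fin k₀ → ℝ)) (Dp : Set (Fin l → ℝ))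
    (X : Set (Fin n → ℝ)) (j : ℕ) :
    Set ((Fin n → ℝ) × (Fin τ → Fin m → ℝ) × (Fin p → Fin l → ℝ)) :=
  {z | (A ^ j).mulVec z.1 +
        (∑ q : Fin τ, if (q : ℕ) < j then (A ^ (j - 1 - (q : ℕ))).mulVec (B.mulVec (z.2.1 q))
          else 0) +
        (∑ r : Fin p, if (r : ℕ) < j then (A ^ (j - 1 - (r : ℕ))).mulVec (Fp.mulVec (z.2.2 r))
          else 0) ∈ minkDiff X (ESet A F₀ Fp D₀ Dp j (j - p))}

/-- `C_{p,ext} = C_{p,0} ∩ ⋯ ∩ C_{p,τ-1} ∩ C_{p,τ} ∩ S_p`. -/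
def CpExt {n m k₀ l : ℕ} (τ p : ℕ) (A : Matrix (Fin n) (Fin n) ℝ)
    (B : Matrix (Fin n) (Fin m) ℝ) (F₀ : Matrix (Fin n) (Fin k₀) ℝ)
    (Fp : Matrix (Fin n) (Fin l) ℝ) (U : Set (Fin m → ℝ)) (D₀ : Set (Fin k₀ → ℝ))
    (Dp : Set (Fin l → ℝ)) (X : Set (Fin n → ℝ)) (Chp : Set (Fin n → ℝ)) :
    Set ((Fin n → ℝ) × (Fin τ → Fin m → ℝ) × (Fin p → Fin l → ℝ)) :=
  (⋂ j ∈ Finset.range τ, CpJ τ p A B F₀ Fp D₀ Dp X j) ∩ CpTau τ p A B Fp Chp ∩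
    safeAugP τ p U Dp X


namespace CpextAux

/-- Extension of a `Fin N`-indexed family to `ℕ` (by zero). -/
def ext {N : ℕ} {α : Type*} [Zero α] (w : Fin N → α) : ℕ → α :=
  fun k => if h : k < N then w ⟨k, h⟩ else 0

lemma ext_eq {N : ℕ} {α : Type*} [Zero α] (w : Fin N → α) {k : ℕ} (h : k < N) :
    ext w k = w ⟨k, h⟩ :=
  dif_pos h

lemma ext_coe {N : ℕ} {α : Type*} [Zero α] (w : Fin N → α) (q : Fin N) :
    ext w (q : ℕ) = w q :=
  dif_pos q.isLt

lemma sum_fin_ite {M : Type*} [AddCommMonoid M] (N j : ℕ) (f : ℕ → M) :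
    (∑ q : Fin N, if (q : ℕ) < j then f (q : ℕ) else 0) =
      ∑ k ∈ Finset.range (min j N), f k := by
  rw [Fin.sum_univ_eq_sum_range (fun k => if k < j then f k else 0) N,
    ← Finset.sum_subset (Finset.range_subset_range.mpr (min_le_right j N))
      (fun k hk hk' => if_neg (by simp only [Finset.mem_range] at hk hk'; omega))]
  exact Finset.sum_congr rfl fun k hk =>
    if_pos (by simp only [Finset.mem_range] at hk; omega)

lemma fin_sum_ite_ext {N : ℕ} {α M : Type*} [Zero α] [AddCommMonoid M] (j : ℕ)
    (w : Fin N → α) (g : ℕ → α → M) :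
    (∑ q : Fin N, if (q : ℕ) < j then g (q : ℕ) (w q) else 0) =
      ∑ k ∈ Finset.range (min j N), g k (ext w k) := by
  rw [← sum_fin_ite N j (fun k => g k (ext w k))]
  exact Finset.sum_congr rfl fun q _ => by rw [ext_coe]

lemma fin_sum_ext {N : ℕ} {α M : Type*} [Zero α] [AddCommMonoid M]
    (w : Fin N → α) (g : ℕ → α → M) :
    (∑ q : Fin N, g (q : ℕ) (w q)) = ∑ k ∈ Finset.range N, g k (ext w k) := by
  rw [← Fin.sum_univ_eq_sum_range (fun k => g k (ext w k)) N]
  exact Finset.sum_congr rfl fun q _ => by rw [ext_coe]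

lemma mulVec_sum {n n' : ℕ} (A : Matrix (Fin n) (Fin n') ℝ) (s : Finset ℕ)
    (f : ℕ → Fin n' → ℝ) :
    A.mulVec (∑ i ∈ s, f i) = ∑ i ∈ s, A.mulVec (f i) := by
  exact Matrix.mulVec_sum A s f

end CpextAux

open CpextAux in
/-- The "range form" of the prediction expressions appearing in `CpJ` and `predMapP`. -/
def rexp {n m l : ℕ} (τ p : ℕ) (A : Matrix (Fin n) (Fin n) ℝ)
    (B : Matrix (Fin n) (Fin m) ℝ) (Fp : Matrix (Fin n) (Fin l) ℝ)
    (z : (Fin n → ℝ) × (Fin τ → Fin m → ℝ) × (Fin p → Fin l → ℝ)) (j : ℕ) :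
    Fin n → ℝ :=
  (A ^ j).mulVec z.1 +
    (∑ k ∈ Finset.range (min j τ), (A ^ (j - 1 - k)).mulVec (B.mulVec (ext z.2.1 k))) +
    ∑ k ∈ Finset.range (min j p), (A ^ (j - 1 - k)).mulVec (Fp.mulVec (ext z.2.2 k))

namespace CpextAux

lemma mem_cpj_iff {n m k₀ l : ℕ} (τ p : ℕ) (A : Matrix (Fin n) (Fin n) ℝ)
    (B : Matrix (Fin n) (Fin m) ℝ) (F₀ : Matrix (Fin n) (Fin k₀) ℝ)
    (Fp : Matrix (Fin n) (Fin l) ℝ) (D₀ : Set (Fin k₀ → ℝ)) (Dp : Set (Fin l → ℝ))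
    (X : Set (Fin n → ℝ)) (j : ℕ)
    (z : (Fin n → ℝ) × (Fin τ → Fin m → ℝ) × (Fin p → Fin l → ℝ)) :
    z ∈ CpJ τ p A B F₀ Fp D₀ Dp X j ↔
      rexp τ p A B Fp z j ∈ minkDiff X (ESet A F₀ Fp D₀ Dp j (j - p)) := by
  have h1 := fin_sum_ite_ext (N := τ) j z.2.1
    (fun k v => (A ^ (j - 1 - k)).mulVec (B.mulVec v))
  have h2 := fin_sum_ite_ext (N := p) j z.2.2
    (fun k v => (A ^ (j - 1 - k)).mulVec (Fp.mulVec v))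
  simp only [CpJ, Set.mem_setOf_eq, rexp, h1, h2]

lemma predMapP_eq_rexp {n m l : ℕ} (τ p : ℕ) (hpτ : p ≤ τ)
    (A : Matrix (Fin n) (Fin n) ℝ) (B : Matrix (Fin n) (Fin m) ℝ)
    (Fp : Matrix (Fin n) (Fin l) ℝ)
    (z : (Fin n → ℝ) × (Fin τ → Fin m → ℝ) × (Fin p → Fin l → ℝ)) :
    predMapP τ p A B Fp z = rexp τ p A B Fp z τ := by
  have h1 := fin_sum_ext (N := τ) z.2.1
    (fun k v => (A ^ (τ - 1 - k)).mulVec (B.mulVec v))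
  have h2 := fin_sum_ext (N := p) z.2.2
    (fun k v => (A ^ (τ - 1 - k)).mulVec (Fp.mulVec v))
  simp only [predMapP, rexp, Nat.min_self, Nat.min_eq_right hpτ, h1, h2]

end CpextAux

namespace CpextAux

lemma eset_step {n k₀ l : ℕ} (A : Matrix (Fin n) (Fin n) ℝ)
    (F₀ : Matrix (Fin n) (Fin k₀) ℝ) (Fp : Matrix (Fin n) (Fin l) ℝ)
    (D₀ : Set (Fin k₀ → ℝ)) (Dp : Set (Fin l → ℝ)) (j p : ℕ) (hp : 0 < p)
    {e : Fin n → ℝ} (he : e ∈ ESet A F₀ Fp D₀ Dp j (j - p))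
    {d₀ : Fin k₀ → ℝ} (hd : d₀ ∈ D₀) {δf : Fin l → ℝ} (hδ : δf ∈ Dp) :
    (A ^ j).mulVec (F₀.mulVec d₀) +
        (if p ≤ j then (A ^ (j - p)).mulVec (Fp.mulVec δf) else 0) + e ∈
      ESet A F₀ Fp D₀ Dp (j + 1) (j + 1 - p) := by
  unfold ESet at he ⊢
  obtain ⟨e₁, he₁, e₂, he₂, rfl⟩ := Set.mem_add.mp he
  have h₁ : (A ^ j).mulVec (F₀.mulVec d₀) + e₁ ∈
      ∑ i ∈ Finset.Icc 1 (j + 1), (fun v => (A ^ (i - 1)).mulVec (F₀.mulVec v)) '' D₀ := by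
    rw [← Finset.insert_Icc_right_eq_Icc_add_one (show (1:ℕ) ≤ j + 1 by omega),
      Finset.sum_insert (by simp)]
    exact Set.add_mem_add ⟨d₀, hd, by simp⟩ he₁
  by_cases hpj : p ≤ j
  · have h₂ : (A ^ (j - p)).mulVec (Fp.mulVec δf) + e₂ ∈
        ∑ i ∈ Finset.Icc 1 (j + 1 - p), (fun v => (A ^ (i - 1)).mulVec (Fp.mulVec v)) '' Dp := by
      rw [show j + 1 - p = (j - p) + 1 by omega,
        ← Finset.insert_Icc_right_eq_Icc_add_one (show (1:ℕ) ≤ j - p + 1 by omega),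
        Finset.sum_insert (by simp)]
      exact Set.add_mem_add ⟨δf, hδ, by simp⟩ he₂
    rw [if_pos hpj]
    have h3 := Set.add_mem_add h₁ h₂
    convert h3 using 1
    abel
  · rw [if_neg hpj, show j + 1 - p = j - p by omega]
    have h3 := Set.add_mem_add h₁ he₂
    convert h3 using 1
    abel

lemma rexp_step {n m k₀ l : ℕ} (τ p : ℕ) (hτ : 0 < τ) (hp : 0 < p)
    (A : Matrix (Fin n) (Fin n) ℝ) (B : Matrix (Fin n) (Fin m) ℝ)
    (F₀ : Matrix (Fin n) (Fin k₀) ℝ) (Fp : Matrix (Fin n) (Fin l) ℝ)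
    (z : (Fin n → ℝ) × (Fin τ → Fin m → ℝ) × (Fin p → Fin l → ℝ))
    (u : Fin m → ℝ) (d₀ : Fin k₀ → ℝ) (δf : Fin l → ℝ) (j : ℕ) (hj : j < τ) :
    rexp τ p A B Fp (gAugP τ p hτ hp A B F₀ Fp z u d₀ δf) j =
      rexp τ p A B Fp z (j + 1) +
        ((A ^ j).mulVec (F₀.mulVec d₀) +
          (if p ≤ j then (A ^ (j - p)).mulVec (Fp.mulVec δf) else 0)) := by
  have hminjτ : min j τ = j := by omega
  have hminτ : min (j + 1) τ = j + 1 := by omega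
  have hx : (A ^ j).mulVec (gAugP τ p hτ hp A B F₀ Fp z u d₀ δf).1 =
      (A ^ (j + 1)).mulVec z.1 + (A ^ j).mulVec (B.mulVec (ext z.2.1 0)) +
        (A ^ j).mulVec (F₀.mulVec d₀) + (A ^ j).mulVec (Fp.mulVec (ext z.2.2 0)) := by
    show (A ^ j).mulVec (A.mulVec z.1 + B.mulVec (z.2.1 ⟨0, hτ⟩) + F₀.mulVec d₀ +
        Fp.mulVec (z.2.2 ⟨0, hp⟩)) = _
    rw [show z.2.1 ⟨0, hτ⟩ = ext z.2.1 0 from (ext_eq z.2.1 hτ).symm,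
      show z.2.2 ⟨0, hp⟩ = ext z.2.2 0 from (ext_eq z.2.2 hp).symm,
      Matrix.mulVec_add, Matrix.mulVec_add, Matrix.mulVec_add, Matrix.mulVec_mulVec,
      ← pow_succ]
  have hu1 : (∑ k ∈ Finset.range (min j τ),
      (A ^ (j - 1 - k)).mulVec (B.mulVec (ext (gAugP τ p hτ hp A B F₀ Fp z u d₀ δf).2.1 k))) =
      ∑ k ∈ Finset.range j, (A ^ (j - 1 - k)).mulVec (B.mulVec (ext z.2.1 (k + 1))) := by
    rw [hminjτ]
    refine Finset.sum_congr rfl fun k hk => ?_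
    have hk' := Finset.mem_range.mp hk
    have hkτ : k < τ := by omega
    have hk1 : k + 1 < τ := by omega
    have hext : ext (gAugP τ p hτ hp A B F₀ Fp z u d₀ δf).2.1 k = ext z.2.1 (k + 1) := by
      rw [show ext (gAugP τ p hτ hp A B F₀ Fp z u d₀ δf).2.1 k
          = (gAugP τ p hτ hp A B F₀ Fp z u d₀ δf).2.1 ⟨k, hkτ⟩ from ext_eq _ hkτ]
      show (if h : k + 1 < τ then z.2.1 ⟨k + 1, h⟩ else u) = _
      rw [dif_pos hk1]
      exact (ext_eq _ hk1).symm
    rw [hext]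
  have hu2 : (∑ k ∈ Finset.range (min (j + 1) τ),
      (A ^ (j + 1 - 1 - k)).mulVec (B.mulVec (ext z.2.1 k))) =
      (∑ k ∈ Finset.range j, (A ^ (j - 1 - k)).mulVec (B.mulVec (ext z.2.1 (k + 1)))) +
        (A ^ j).mulVec (B.mulVec (ext z.2.1 0)) := by
    rw [hminτ, Finset.sum_range_succ']
    refine congrArg₂ (· + ·) ?_ ?_
    · exact Finset.sum_congr rfl fun k hk => by
        rw [show j + 1 - 1 - (k + 1) = j - 1 - k by omega]
    · rw [show j + 1 - 1 - 0 = j by omega]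
  by_cases hpj : p ≤ j
  · obtain ⟨p', rfl⟩ : ∃ p', p = p' + 1 := ⟨p - 1, by omega⟩
    have hmjp : min j (p' + 1) = p' + 1 := by omega
    have hmj1p : min (j + 1) (p' + 1) = p' + 1 := by omega
    have hδ1 : (∑ k ∈ Finset.range (min j (p' + 1)),
        (A ^ (j - 1 - k)).mulVec
          (Fp.mulVec (ext (gAugP τ (p' + 1) hτ hp A B F₀ Fp z u d₀ δf).2.2 k))) =
        (∑ k ∈ Finset.range p', (A ^ (j - 1 - k)).mulVec (Fp.mulVec (ext z.2.2 (k + 1)))) +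
          (A ^ (j - (p' + 1))).mulVec (Fp.mulVec δf) := by
      rw [hmjp, Finset.sum_range_succ]
      congr 1
      · refine Finset.sum_congr rfl fun k hk => ?_
        have hk' := Finset.mem_range.mp hk
        have hkp : k < p' + 1 := by omega
        have hk1 : k + 1 < p' + 1 := by omega
        have hext : ext (gAugP τ (p' + 1) hτ hp A B F₀ Fp z u d₀ δf).2.2 k
            = ext z.2.2 (k + 1) := by
          rw [show ext (gAugP τ (p' + 1) hτ hp A B F₀ Fp z u d₀ δf).2.2 k
              = (gAugP τ (p' + 1) hτ hp A B F₀ Fp z u d₀ δf).2.2 ⟨k, hkp⟩ from ext_eq _ hkp]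
          show (if h : k + 1 < p' + 1 then z.2.2 ⟨k + 1, h⟩ else δf) = _
          rw [dif_pos hk1]
          exact (ext_eq _ hk1).symm
        rw [hext]
      · have hp'lt : p' < p' + 1 := Nat.lt_succ_self p'
        have hext : ext (gAugP τ (p' + 1) hτ hp A B F₀ Fp z u d₀ δf).2.2 p' = δf := by
          rw [show ext (gAugP τ (p' + 1) hτ hp A B F₀ Fp z u d₀ δf).2.2 p'
              = (gAugP τ (p' + 1) hτ hp A B F₀ Fp z u d₀ δf).2.2 ⟨p', hp'lt⟩ from
              ext_eq _ hp'lt]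
          show (if h : p' + 1 < p' + 1 then z.2.2 ⟨p' + 1, h⟩ else δf) = _
          rw [dif_neg (by omega)]
        rw [hext, show j - 1 - p' = j - (p' + 1) by omega]
    have hδ2 : (∑ k ∈ Finset.range (min (j + 1) (p' + 1)),
        (A ^ (j + 1 - 1 - k)).mulVec (Fp.mulVec (ext z.2.2 k))) =
        (∑ k ∈ Finset.range p', (A ^ (j - 1 - k)).mulVec (Fp.mulVec (ext z.2.2 (k + 1)))) +
          (A ^ j).mulVec (Fp.mulVec (ext z.2.2 0)) := by
      rw [hmj1p, Finset.sum_range_succ']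
      refine congrArg₂ (· + ·) ?_ ?_
      · exact Finset.sum_congr rfl fun k hk => by
          rw [show j + 1 - 1 - (k + 1) = j - 1 - k by omega]
      · rw [show j + 1 - 1 - 0 = j by omega]
    simp only [rexp]
    rw [hx, hu1, hδ1, hu2, hδ2, if_pos hpj]
    abel
  · have hmjp : min j p = j := by omega
    have hmj1p : min (j + 1) p = j + 1 := by omega
    have hδ1 : (∑ k ∈ Finset.range (min j p),
        (A ^ (j - 1 - k)).mulVec
          (Fp.mulVec (ext (gAugP τ p hτ hp A B F₀ Fp z u d₀ δf).2.2 k))) =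
        ∑ k ∈ Finset.range j, (A ^ (j - 1 - k)).mulVec (Fp.mulVec (ext z.2.2 (k + 1))) := by
      rw [hmjp]
      refine Finset.sum_congr rfl fun k hk => ?_
      have hk' := Finset.mem_range.mp hk
      have hkp : k < p := by omega
      have hk1 : k + 1 < p := by omega
      have hext : ext (gAugP τ p hτ hp A B F₀ Fp z u d₀ δf).2.2 k = ext z.2.2 (k + 1) := by
        rw [show ext (gAugP τ p hτ hp A B F₀ Fp z u d₀ δf).2.2 k
            = (gAugP τ p hτ hp A B F₀ Fp z u d₀ δf).2.2 ⟨k, hkp⟩ from ext_eq _ hkp]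
        show (if h : k + 1 < p then z.2.2 ⟨k + 1, h⟩ else δf) = _
        rw [dif_pos hk1]
        exact (ext_eq _ hk1).symm
      rw [hext]
    have hδ2 : (∑ k ∈ Finset.range (min (j + 1) p),
        (A ^ (j + 1 - 1 - k)).mulVec (Fp.mulVec (ext z.2.2 k))) =
        (∑ k ∈ Finset.range j, (A ^ (j - 1 - k)).mulVec (Fp.mulVec (ext z.2.2 (k + 1)))) +
          (A ^ j).mulVec (Fp.mulVec (ext z.2.2 0)) := by
      rw [hmj1p, Finset.sum_range_succ']
      refine congrArg₂ (· + ·) ?_ ?_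
      · exact Finset.sum_congr rfl fun k hk => by
          rw [show j + 1 - 1 - (k + 1) = j - 1 - k by omega]
      · rw [show j + 1 - 1 - 0 = j by omega]
    simp only [rexp]
    rw [hx, hu1, hδ1, hu2, hδ2, if_neg hpj]
    abel

end CpextAux

namespace CpextAux

lemma rexp_tau_step {n m k₀ l : ℕ} (τ p : ℕ) (hτ : 0 < τ) (hp : 0 < p) (hpτ : p ≤ τ)
    (A : Matrix (Fin n) (Fin n) ℝ) (B : Matrix (Fin n) (Fin m) ℝ)
    (F₀ : Matrix (Fin n) (Fin k₀) ℝ) (Fp : Matrix (Fin n) (Fin l) ℝ)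
    (z : (Fin n → ℝ) × (Fin τ → Fin m → ℝ) × (Fin p → Fin l → ℝ))
    (u : Fin m → ℝ) (d₀ : Fin k₀ → ℝ) (δf : Fin l → ℝ) :
    rexp τ p A B Fp (gAugP τ p hτ hp A B F₀ Fp z u d₀ δf) τ =
      fAuxP τ p A B F₀ Fp (rexp τ p A B Fp z τ) u d₀ δf := by
  obtain ⟨τ', rfl⟩ : ∃ τ', τ = τ' + 1 := ⟨τ - 1, by omega⟩
  obtain ⟨p', rfl⟩ : ∃ p', p = p' + 1 := ⟨p - 1, by omega⟩
  have hdist : A.mulVec (rexp (τ' + 1) (p' + 1) A B Fp z (τ' + 1)) =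
      (A ^ (τ' + 1 + 1)).mulVec z.1 +
        (∑ k ∈ Finset.range (τ' + 1), (A ^ (τ' + 1 - k)).mulVec (B.mulVec (ext z.2.1 k))) +
        ∑ k ∈ Finset.range (p' + 1), (A ^ (τ' + 1 - k)).mulVec (Fp.mulVec (ext z.2.2 k)) := by
    simp only [rexp, Nat.min_self, Nat.min_eq_right hpτ]
    rw [Matrix.mulVec_add, Matrix.mulVec_add, mulVec_sum, mulVec_sum]
    refine congrArg₂ (· + ·) (congrArg₂ (· + ·) ?_ ?_) ?_
    · rw [Matrix.mulVec_mulVec, ← pow_succ']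
    · refine Finset.sum_congr rfl fun k hk => ?_
      have hk' := Finset.mem_range.mp hk
      rw [Matrix.mulVec_mulVec, ← pow_succ', show τ' + 1 - 1 - k + 1 = τ' + 1 - k by omega]
    · refine Finset.sum_congr rfl fun k hk => ?_
      have hk' := Finset.mem_range.mp hk
      rw [Matrix.mulVec_mulVec, ← pow_succ', show τ' + 1 - 1 - k + 1 = τ' + 1 - k by omega]
  have hx : (A ^ (τ' + 1)).mulVec (gAugP (τ' + 1) (p' + 1) hτ hp A B F₀ Fp z u d₀ δf).1 =
      (A ^ (τ' + 1 + 1)).mulVec z.1 + (A ^ (τ' + 1)).mulVec (B.mulVec (ext z.2.1 0)) +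
        (A ^ (τ' + 1)).mulVec (F₀.mulVec d₀) +
        (A ^ (τ' + 1)).mulVec (Fp.mulVec (ext z.2.2 0)) := by
    show (A ^ (τ' + 1)).mulVec (A.mulVec z.1 + B.mulVec (z.2.1 ⟨0, hτ⟩) + F₀.mulVec d₀ +
        Fp.mulVec (z.2.2 ⟨0, hp⟩)) = _
    rw [show z.2.1 ⟨0, hτ⟩ = ext z.2.1 0 from (ext_eq z.2.1 hτ).symm,
      show z.2.2 ⟨0, hp⟩ = ext z.2.2 0 from (ext_eq z.2.2 hp).symm,
      Matrix.mulVec_add, Matrix.mulVec_add, Matrix.mulVec_add, Matrix.mulVec_mulVec,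
      ← pow_succ]
  have hu1 : (∑ k ∈ Finset.range (min (τ' + 1) (τ' + 1)),
      (A ^ (τ' + 1 - 1 - k)).mulVec
        (B.mulVec (ext (gAugP (τ' + 1) (p' + 1) hτ hp A B F₀ Fp z u d₀ δf).2.1 k))) =
      (∑ k ∈ Finset.range τ', (A ^ (τ' - k)).mulVec (B.mulVec (ext z.2.1 (k + 1)))) +
        B.mulVec u := by
    rw [Nat.min_self, Finset.sum_range_succ]
    refine congrArg₂ (· + ·) ?_ ?_
    · refine Finset.sum_congr rfl fun k hk => ?_
      have hk' := Finset.mem_range.mp hk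
      have hkτ : k < τ' + 1 := by omega
      have hk1 : k + 1 < τ' + 1 := by omega
      have hext : ext (gAugP (τ' + 1) (p' + 1) hτ hp A B F₀ Fp z u d₀ δf).2.1 k
          = ext z.2.1 (k + 1) := by
        rw [show ext (gAugP (τ' + 1) (p' + 1) hτ hp A B F₀ Fp z u d₀ δf).2.1 k
            = (gAugP (τ' + 1) (p' + 1) hτ hp A B F₀ Fp z u d₀ δf).2.1 ⟨k, hkτ⟩ from
            ext_eq _ hkτ]
        show (if h : k + 1 < τ' + 1 then z.2.1 ⟨k + 1, h⟩ else u) = _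
        rw [dif_pos hk1]
        exact (ext_eq _ hk1).symm
      rw [hext, show τ' + 1 - 1 - k = τ' - k by omega]
    · have hτ'lt : τ' < τ' + 1 := Nat.lt_succ_self τ'
      have hext : ext (gAugP (τ' + 1) (p' + 1) hτ hp A B F₀ Fp z u d₀ δf).2.1 τ' = u := by
        rw [show ext (gAugP (τ' + 1) (p' + 1) hτ hp A B F₀ Fp z u d₀ δf).2.1 τ'
            = (gAugP (τ' + 1) (p' + 1) hτ hp A B F₀ Fp z u d₀ δf).2.1 ⟨τ', hτ'lt⟩ from
            ext_eq _ hτ'lt]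
        show (if h : τ' + 1 < τ' + 1 then z.2.1 ⟨τ' + 1, h⟩ else u) = _
        rw [dif_neg (by omega)]
      rw [hext, show τ' + 1 - 1 - τ' = 0 by omega, pow_zero, Matrix.one_mulVec]
  have hu2 : (∑ k ∈ Finset.range (τ' + 1),
      (A ^ (τ' + 1 - k)).mulVec (B.mulVec (ext z.2.1 k))) =
      (∑ k ∈ Finset.range τ', (A ^ (τ' - k)).mulVec (B.mulVec (ext z.2.1 (k + 1)))) +
        (A ^ (τ' + 1)).mulVec (B.mulVec (ext z.2.1 0)) := by
    rw [Finset.sum_range_succ']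
    refine congrArg₂ (· + ·) ?_ ?_
    · exact Finset.sum_congr rfl fun k hk => by
        rw [show τ' + 1 - (k + 1) = τ' - k by omega]
    · rw [show τ' + 1 - 0 = τ' + 1 by omega]
  have hδ1 : (∑ k ∈ Finset.range (min (τ' + 1) (p' + 1)),
      (A ^ (τ' + 1 - 1 - k)).mulVec
        (Fp.mulVec (ext (gAugP (τ' + 1) (p' + 1) hτ hp A B F₀ Fp z u d₀ δf).2.2 k))) =
      (∑ k ∈ Finset.range p', (A ^ (τ' - k)).mulVec (Fp.mulVec (ext z.2.2 (k + 1)))) +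
        (A ^ (τ' + 1 - (p' + 1))).mulVec (Fp.mulVec δf) := by
    rw [Nat.min_eq_right hpτ, Finset.sum_range_succ]
    refine congrArg₂ (· + ·) ?_ ?_
    · refine Finset.sum_congr rfl fun k hk => ?_
      have hk' := Finset.mem_range.mp hk
      have hkp : k < p' + 1 := by omega
      have hk1 : k + 1 < p' + 1 := by omega
      have hext : ext (gAugP (τ' + 1) (p' + 1) hτ hp A B F₀ Fp z u d₀ δf).2.2 k
          = ext z.2.2 (k + 1) := by
        rw [show ext (gAugP (τ' + 1) (p' + 1) hτ hp A B F₀ Fp z u d₀ δf).2.2 k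
            = (gAugP (τ' + 1) (p' + 1) hτ hp A B F₀ Fp z u d₀ δf).2.2 ⟨k, hkp⟩ from
            ext_eq _ hkp]
        show (if h : k + 1 < p' + 1 then z.2.2 ⟨k + 1, h⟩ else δf) = _
        rw [dif_pos hk1]
        exact (ext_eq _ hk1).symm
      rw [hext, show τ' + 1 - 1 - k = τ' - k by omega]
    · have hp'lt : p' < p' + 1 := Nat.lt_succ_self p'
      have hext : ext (gAugP (τ' + 1) (p' + 1) hτ hp A B F₀ Fp z u d₀ δf).2.2 p' = δf := by
        rw [show ext (gAugP (τ' + 1) (p' + 1) hτ hp A B F₀ Fp z u d₀ δf).2.2 p'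
            = (gAugP (τ' + 1) (p' + 1) hτ hp A B F₀ Fp z u d₀ δf).2.2 ⟨p', hp'lt⟩ from
            ext_eq _ hp'lt]
        show (if h : p' + 1 < p' + 1 then z.2.2 ⟨p' + 1, h⟩ else δf) = _
        rw [dif_neg (by omega)]
      rw [hext, show τ' + 1 - 1 - p' = τ' + 1 - (p' + 1) by omega]
  have hδ2 : (∑ k ∈ Finset.range (p' + 1),
      (A ^ (τ' + 1 - k)).mulVec (Fp.mulVec (ext z.2.2 k))) =
      (∑ k ∈ Finset.range p', (A ^ (τ' - k)).mulVec (Fp.mulVec (ext z.2.2 (k + 1)))) +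
        (A ^ (τ' + 1)).mulVec (Fp.mulVec (ext z.2.2 0)) := by
    rw [Finset.sum_range_succ']
    refine congrArg₂ (· + ·) ?_ ?_
    · exact Finset.sum_congr rfl fun k hk => by
        have hk' := Finset.mem_range.mp hk
        rw [show τ' + 1 - (k + 1) = τ' - k by omega]
    · rw [show τ' + 1 - 0 = τ' + 1 by omega]
  simp only [fAuxP]
  rw [hdist, hu2, hδ2]
  simp only [rexp]
  rw [hx, hu1, hδ1]
  abel

lemma mem_X_of_cpj0 {n m k₀ l : ℕ} (τ p : ℕ) (hp : 0 < p)
    (A : Matrix (Fin n) (Fin n) ℝ) (B : Matrix (Fin n) (Fin m) ℝ)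
    (F₀ : Matrix (Fin n) (Fin k₀) ℝ) (Fp : Matrix (Fin n) (Fin l) ℝ)
    (D₀ : Set (Fin k₀ → ℝ)) (Dp : Set (Fin l → ℝ)) (X : Set (Fin n → ℝ))
    {z : (Fin n → ℝ) × (Fin τ → Fin m → ℝ) × (Fin p → Fin l → ℝ)}
    (hz : z ∈ CpJ τ p A B F₀ Fp D₀ Dp X 0) : z.1 ∈ X := by
  rw [mem_cpj_iff] at hz
  simp only [minkDiff, Set.mem_setOf_eq] at hz
  have h00 : (0 : Fin n → ℝ) ∈ ESet A F₀ Fp D₀ Dp 0 (0 - p) := by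
    unfold ESet
    rw [show (0 : ℕ) - p = 0 by omega,
      show Finset.Icc 1 0 = (∅ : Finset ℕ) from Finset.Icc_eq_empty (by omega),
      ]
    simp only [Finset.sum_empty, add_zero]
    exact Set.mem_zero.mpr rfl
  have h := hz 0 h00
  simpa [rexp, Matrix.one_mulVec] using h

end CpextAux
/-- (Corollary 2) If `Ĉ_p` is controlled invariant within `X̂` for the auxiliary system
`Σ_aux^prev`, then `C_{p,ext}` is controlled invariant within `S_p` for the augmented
system `Σ_aug^prev`. -/
theorem cpext_ctrlInv_of_auxP_ctrlInv (n m k₀ l : ℕ) (hn : 0 < n) (hm : 0 < m)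
    (hk : 0 < k₀) (hl : 0 < l) (τ p : ℕ) (hτ : 1 ≤ τ) (hp1 : 1 ≤ p) (hpτ : p ≤ τ)
    (A : Matrix (Fin n) (Fin n) ℝ) (B : Matrix (Fin n) (Fin m) ℝ)
    (F₀ : Matrix (Fin n) (Fin k₀) ℝ) (Fp : Matrix (Fin n) (Fin l) ℝ)
    (U : Set (Fin m → ℝ)) (D₀ : Set (Fin k₀ → ℝ)) (Dp : Set (Fin l → ℝ))
    (X : Set (Fin n → ℝ)) (Chp : Set (Fin n → ℝ))
    (hChp : CtrlInvAuxP τ p A B F₀ Fp U D₀ Dp X Chp) :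
    CtrlInvAugP τ p hτ hp1 A B F₀ Fp U D₀ Dp X (CpExt τ p A B F₀ Fp U D₀ Dp X Chp) := by
  classical
  obtain ⟨hsub, hstep⟩ := hChp
  constructor
  · exact fun z hz => hz.2
  rintro z ⟨⟨hJ, hTau⟩, hSafe⟩
  have hxh : predMapP τ p A B Fp z ∈ Chp := hTau
  obtain ⟨u, hu, hinv⟩ := hstep _ hxh
  refine ⟨u, hu, fun d₀ hd δf hδ => ?_⟩
  have hJ' : ∀ j, j < τ → z ∈ CpJ τ p A B F₀ Fp D₀ Dp X j := fun j hj =>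
    Set.mem_iInter₂.mp hJ j (Finset.mem_range.mpr hj)
  have hrexpτ : rexp τ p A B Fp z τ ∈ Chp := by
    rw [← CpextAux.predMapP_eq_rexp τ p hpτ]; exact hxh
  have hSafe' : z.1 ∈ X ∧ (∀ i : Fin τ, z.2.1 i ∈ U) ∧ ∀ i : Fin p, z.2.2 i ∈ Dp := hSafe
  have key : ∀ j, j < τ →
      gAugP τ p hτ hp1 A B F₀ Fp z u d₀ δf ∈ CpJ τ p A B F₀ Fp D₀ Dp X j := by
    intro j hjτ
    rw [CpextAux.mem_cpj_iff]
    have hnext : rexp τ p A B Fp z (j + 1) ∈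
        minkDiff X (ESet A F₀ Fp D₀ Dp (j + 1) (j + 1 - p)) := by
      by_cases hj1 : j + 1 < τ
      · exact (CpextAux.mem_cpj_iff τ p A B F₀ Fp D₀ Dp X (j + 1) z).mp (hJ' (j + 1) hj1)
      · have hjeq : j + 1 = τ := by omega
        rw [hjeq]
        exact hsub hrexpτ
    rw [CpextAux.rexp_step τ p hτ hp1 A B F₀ Fp z u d₀ δf j hjτ]
    simp only [minkDiff, Set.mem_setOf_eq] at hnext ⊢
    intro e he
    have h3 := hnext _ (CpextAux.eset_step A F₀ Fp D₀ Dp j p hp1 he hd hδ)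
    have heq : rexp τ p A B Fp z (j + 1) +
        ((A ^ j).mulVec (F₀.mulVec d₀) +
          (if p ≤ j then (A ^ (j - p)).mulVec (Fp.mulVec δf) else 0)) + e =
        rexp τ p A B Fp z (j + 1) +
          ((A ^ j).mulVec (F₀.mulVec d₀) +
            (if p ≤ j then (A ^ (j - p)).mulVec (Fp.mulVec δf) else 0) + e) := by abel
    rw [heq]
    exact h3
  refine ⟨⟨Set.mem_iInter₂.mpr fun j hj => key j (Finset.mem_range.mp hj), ?_⟩, ?_, ?_, ?_⟩
  · show predMapP τ p A B Fp (gAugP τ p hτ hp1 A B F₀ Fp z u d₀ δf) ∈ Chp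
    rw [CpextAux.predMapP_eq_rexp τ p hpτ,
      CpextAux.rexp_tau_step τ p hτ hp1 hpτ A B F₀ Fp z u d₀ δf,
      ← CpextAux.predMapP_eq_rexp τ p hpτ]
    exact hinv d₀ hd δf hδ
  · exact CpextAux.mem_X_of_cpj0 τ p hp1 A B F₀ Fp D₀ Dp X (key 0 hτ)
  · intro i
    show (if h : (i : ℕ) + 1 < τ then z.2.1 ⟨(i : ℕ) + 1, h⟩ else u) ∈ U
    split
    · exact hSafe'.2.1 _
    · exact hu
  · intro i
    show (if h : (i : ℕ) + 1 < p then z.2.2 ⟨(i : ℕ) + 1, h⟩ else δf) ∈ Dp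
    split
    · exact hSafe'.2.2 _
    · exact hδ
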